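/- Let a and b be two parallel vertical lines with a to the left of b, let P be a nonempty finite set of points strictly between a and b and Q a nonempty finite set of points strictly to the right of b, with P ∪ Q in general position. Then there exists a unique pair (p, q) with p ∈ P, q ∈ Q such that every point of (P ∪ Q) \ {p, q} lies strictly below the line through p and q. -/

import Mathlib

open Set

/-- A set of points is in general position if no three distinct points of it are
collinear. -/
def GenPos (S : Set (ℝ × ℝ)) : Prop :=
  ∀ p ∈ S, ∀ q ∈ S, ∀ r ∈ S, p ≠ q → p ≠ r → q ≠ r →
    ¬ Collinear ℝ ({p, q, r} : Set (ℝ × ℝ))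

/-- The line through two (distinct) points, as a set of points. -/
def lineThrough (a b : ℝ × ℝ) : Set (ℝ × ℝ) :=
  {x | Collinear ℝ ({a, b, x} : Set (ℝ × ℝ))}

private lemma key9 (b : ℝ) (p q p' q' : ℝ × ℝ)
    (hp : p.1 < b) (hq : b < q.1) (hp' : p'.1 < b) (hq' : b < q'.1)
    (h1 : (q.1-p.1) * (p'.2-p.2) - (q.2-p.2) * (p'.1-p.1) ≤ 0)
    (h2 : (q.1-p.1) * (q'.2-p.2) - (q.2-p.2) * (q'.1-p.1) ≤ 0)
    (hs : (q.1-p.1) * (p'.2-p.2) - (q.2-p.2) * (p'.1-p.1) < 0 ∨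
          (q.1-p.1) * (q'.2-p.2) - (q.2-p.2) * (q'.1-p.1) < 0) :
    (p'.2*(q'.1-b)+q'.2*(b-p'.1)) / (q'.1-p'.1) < (p.2*(q.1-b)+q.2*(b-p.1)) / (q.1-p.1) := by
  rw [div_lt_div_iff₀ (by linarith) (by linarith)]
  have hid : (p.2*(q.1-b)+q.2*(b-p.1)) * (q'.1-p'.1) - (p'.2*(q'.1-b)+q'.2*(b-p'.1)) * (q.1-p.1)
      = -((q'.1-b) * ((q.1-p.1)*(p'.2-p.2) - (q.2-p.2)*(p'.1-p.1)))
      - (b-p'.1) * ((q.1-p.1)*(q'.2-p.2) - (q.2-p.2)*(q'.1-p.1)) := by ring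
  have w1 : (0:ℝ) < q'.1 - b := by linarith
  have w2 : (0:ℝ) < b - p'.1 := by linarith
  rcases hs with hs | hs
  · nlinarith [mul_neg_of_pos_of_neg w1 hs, mul_nonpos_of_nonneg_of_nonpos w2.le h2]
  · nlinarith [mul_neg_of_pos_of_neg w2 hs, mul_nonpos_of_nonneg_of_nonpos w1.le h1]

private lemma coll9 (p q z : ℝ × ℝ) (hpq : q.1 - p.1 ≠ 0)
    (h : (q.1 - p.1) * (z.2 - p.2) - (q.2 - p.2) * (z.1 - p.1) = 0) :
    Collinear ℝ ({p, q, z} : Set (ℝ × ℝ)) := by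
  rw [collinear_iff_of_mem (Set.mem_insert p _)]
  refine ⟨q - p, fun x hx => ?_⟩
  simp only [Set.mem_insert_iff, Set.mem_singleton_iff] at hx
  rcases hx with rfl | rfl | rfl
  · exact ⟨0, by simp⟩
  · exact ⟨1, by simp⟩
  · refine ⟨(x.1 - p.1) / (q.1 - p.1), ?_⟩
    have h2 : (q.1 - p.1) * (x.2 - p.2) = (q.2 - p.2) * (x.1 - p.1) := by linarith
    have e1 : (((x.1 - p.1) / (q.1 - p.1)) • (q - p) + p).1 = x.1 := by
      simp [Prod.smul_def]; field_simp; ring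
    have e2 : (((x.1 - p.1) / (q.1 - p.1)) • (q - p) + p).2 = x.2 := by
      simp [Prod.smul_def]; field_simp; linarith
    exact Prod.ext e1.symm e2.symm

/-- existence and uniqueness of the "upper cap": given a nonempty finite set
`P` strictly between the vertical lines `x = a` and `x = b` and a nonempty finite set `Q`
strictly to the right of `x = b`, with `P ∪ Q` in general position, there is a unique
pair `(p, q) ∈ P × Q` such that every other point of `P ∪ Q` lies strictly below the
line through `p` and `q`. -/
theorem stmt9 (a b : ℝ) (hab : a < b) (P Q : Finset (ℝ × ℝ))
    (hPne : P.Nonempty) (hQne : Q.Nonempty)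
    (hPx : ∀ p ∈ P, a < p.1 ∧ p.1 < b) (hQx : ∀ q ∈ Q, b < q.1)
    (hgen : GenPos (↑P ∪ ↑Q)) :
    ∃! pq : (ℝ × ℝ) × (ℝ × ℝ), pq.1 ∈ P ∧ pq.2 ∈ Q ∧
      ∀ z ∈ (↑P ∪ ↑Q : Set (ℝ × ℝ)), z ≠ pq.1 → z ≠ pq.2 →
        (pq.2.1 - pq.1.1) * (z.2 - pq.1.2) - (pq.2.2 - pq.1.2) * (z.1 - pq.1.1) < 0 := by
  classical
  set F : (ℝ × ℝ) × (ℝ × ℝ) → ℝ :=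
    fun pq => (pq.1.2*(pq.2.1-b)+pq.2.2*(b-pq.1.1)) / (pq.2.1-pq.1.1) with hF
  -- the predicate
  set Φ : (ℝ × ℝ) × (ℝ × ℝ) → Prop := fun pq => pq.1 ∈ P ∧ pq.2 ∈ Q ∧
      ∀ z ∈ (↑P ∪ ↑Q : Set (ℝ × ℝ)), z ≠ pq.1 → z ≠ pq.2 →
        (pq.2.1 - pq.1.1) * (z.2 - pq.1.2) - (pq.2.2 - pq.1.2) * (z.1 - pq.1.1) < 0 with hΦ
  -- any satisfying pair dominates any other pair in F
  have dom : ∀ A B : (ℝ × ℝ) × (ℝ × ℝ), Φ A → B.1 ∈ P → B.2 ∈ Q → B ≠ A → F B < F A := by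
    rintro ⟨p, q⟩ ⟨p', q'⟩ ⟨hpP, hqQ, hbel⟩ hp'P hq'Q hne
    have hpb : p.1 < b := (hPx p hpP).2
    have hqb : b < q.1 := hQx q hqQ
    have hp'b : p'.1 < b := (hPx p' hp'P).2
    have hq'b : b < q'.1 := hQx q' hq'Q
    have hp'q : p' ≠ q := fun h => by rw [h] at hp'b; linarith
    have hq'p : q' ≠ p := fun h => by rw [h] at hq'b; linarith
    have hne' : p' ≠ p ∨ q' ≠ q := by
      by_contra h
      push_neg at h
      exact hne (Prod.ext h.1 h.2)
    have h1 : (q.1-p.1) * (p'.2-p.2) - (q.2-p.2) * (p'.1-p.1) ≤ 0 := by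
      rcases eq_or_ne p' p with rfl | hpp
      · apply le_of_eq; ring
      · exact (hbel p' (Or.inl hp'P) hpp hp'q).le
    have h2 : (q.1-p.1) * (q'.2-p.2) - (q.2-p.2) * (q'.1-p.1) ≤ 0 := by
      rcases eq_or_ne q' q with rfl | hqq
      · apply le_of_eq; ring
      · exact (hbel q' (Or.inr hq'Q) hq'p hqq).le
    have hs : (q.1-p.1) * (p'.2-p.2) - (q.2-p.2) * (p'.1-p.1) < 0 ∨
        (q.1-p.1) * (q'.2-p.2) - (q.2-p.2) * (q'.1-p.1) < 0 := by
      rcases hne' with hpp | hqq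
      · exact Or.inl (hbel p' (Or.inl hp'P) hpp hp'q)
      · exact Or.inr (hbel q' (Or.inr hq'Q) hq'p hqq)
    exact key9 b p q p' q' hpb hqb hp'b hq'b h1 h2 hs
  -- existence via a maximizer of F
  obtain ⟨pq, hmem, hmax⟩ := (P ×ˢ Q).exists_max_image F (hPne.product hQne)
  obtain ⟨p, q⟩ := pq
  rw [Finset.mem_product] at hmem
  obtain ⟨hpP, hqQ⟩ := hmem
  have hpb : p.1 < b := (hPx p hpP).2
  have hqb : b < q.1 := hQx q hqQ
  have hpq : p ≠ q := fun h => by rw [h] at hpb; linarith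
  have good : Φ (p, q) := by
    refine ⟨hpP, hqQ, fun z hz hzp hzq => ?_⟩
    by_contra hge
    push_neg at hge
    rcases eq_or_lt_of_le hge with heq | hpos
    · -- collinear triple, contradicting general position
      have hc := coll9 p q z (ne_of_gt (by linarith : (0:ℝ) < q.1 - p.1)) heq.symm
      exact hgen p (Or.inl hpP) q (Or.inr hqQ) z hz hpq (Ne.symm hzp) (Ne.symm hzq) hc
    · rcases hz with hzP | hzQ
      · -- z ∈ P : pair (z, q) beats (p, q)
        have hzb : z.1 < b := (hPx z hzP).2
        have h1 : (q.1-z.1) * (p.2-z.2) - (q.2-z.2) * (p.1-z.1) < 0 := by nlinarith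
        have hk := key9 b z q p q hzb hqb hpb hqb h1.le (le_of_eq (by ring)) (Or.inl h1)
        have := hmax (z, q) (Finset.mem_product.2 ⟨hzP, hqQ⟩)
        simp only [hF] at this
        exact absurd hk (by push_neg; exact this)
      · -- z ∈ Q : pair (p, z) beats (p, q)
        have hzb : b < z.1 := hQx z hzQ
        have h2 : (z.1-p.1) * (q.2-p.2) - (z.2-p.2) * (q.1-p.1) < 0 := by nlinarith
        have hk := key9 b p z p q hpb hzb hpb hqb (le_of_eq (by ring)) h2.le (Or.inr h2)
        have := hmax (p, z) (Finset.mem_product.2 ⟨hpP, hzQ⟩)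
        simp only [hF] at this
        exact absurd hk (by push_neg; exact this)
  refine ⟨(p, q), good, ?_⟩
  rintro y hy
  by_contra hne
  have h1 := dom (p, q) y good hy.1 hy.2.1 hne
  have h2 := dom y (p, q) hy hpP hqQ (Ne.symm hne)
  linarith
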